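/- Let n ≥ 2, m ≥ 2, and let W be the n × n circulant matrix whose j-th column is (m−1)·e_{s_j} − e_{s_{j+1}} − ... − e_{s_{j+m−1}}, where s_k is the residue of k in [n]. Then W has rank n − 1. -/

import Mathlib

/-- `sres n hn j` is the residue of `j` modulo `n`, as an element of `Fin n`. -/
def sres (n : ℕ) (hn : 0 < n) (j : ℕ) : Fin n := ⟨j % n, Nat.mod_lt j hn⟩

open Fin.NatCast Fin.CommRing in
/-- The circulant matrix whose j-th column is
`(m−1)·e_{s_j} − e_{s_{j+1}} − ⋯ − e_{s_{j+m−1}}` has rank `n − 1`. -/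
theorem stmt_13 (n m : ℕ) (hn : 2 ≤ n) (hm : 2 ≤ m)
    (hn' : 0 < n)
    (W : Matrix (Fin n) (Fin n) ℝ)
    (hW : ∀ j : Fin n, (fun i => W i j) =
      ((m - 1 : ℕ) : ℝ) • (Pi.single (sres n hn' (j : ℕ)) (1 : ℝ) : Fin n → ℝ) -
        ∑ l ∈ Finset.Icc 1 (m - 1),
          (Pi.single (sres n hn' ((j : ℕ) + l)) (1 : ℝ) : Fin n → ℝ)) :
    W.rank = n - 1 := by
  haveI : NeZero n := ⟨by omega⟩
  have hcast : ∀ (j : Fin n) (l : ℕ), sres n hn' ((j : ℕ) + l) = j + (l : Fin n) := by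
    intro j l
    ext
    simp [sres, Fin.add_def, Fin.val_natCast, Nat.add_mod]
  have hsj : ∀ j : Fin n, sres n hn' (j : ℕ) = j := by
    intro j; ext; simp [sres, Nat.mod_eq_of_lt j.isLt]
  have hW' : ∀ i j : Fin n, W i j =
      ((m - 1 : ℕ) : ℝ) * (if i = j then 1 else 0)
        - ∑ l ∈ Finset.Icc 1 (m - 1), (if i = j + (l : Fin n) then (1 : ℝ) else 0) := by
    intro i j
    have h := congrFun (hW j) i
    simpa [hcast, hsj, Pi.single_apply, mul_ite] using h
  have hmv : ∀ (v : Fin n → ℝ) (i : Fin n), W.mulVec v i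
      = ((m - 1 : ℕ) : ℝ) * v i - ∑ l ∈ Finset.Icc 1 (m - 1), v (i - (l : Fin n)) := by
    intro v i
    have key : ∀ l : ℕ, (∑ j : Fin n, (if i = j + (l : Fin n) then (1:ℝ) else 0) * v j)
        = v (i - (l : Fin n)) := by
      intro l
      have : ∀ j : Fin n, (i = j + (l : Fin n)) ↔ (j = i - (l : Fin n)) := by
        intro j; rw [eq_sub_iff_add_eq, eq_comm]
      simp only [this]
      simp
    simp only [Matrix.mulVec, dotProduct, hW', sub_mul, Finset.sum_sub_distrib,
      Finset.sum_mul, ite_mul, one_mul, zero_mul, mul_ite, mul_zero]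
    rw [Finset.sum_comm]
    congr 1
    · simp
    · exact Finset.sum_congr rfl fun l _ => by
        simpa [ite_mul, one_mul, zero_mul] using key l
  have hm1 : (1:ℕ) ∈ Finset.Icc 1 (m-1) := by
    simp; omega
  have hcard : (Finset.Icc 1 (m-1)).card = m - 1 := by
    rw [Nat.card_Icc]; omega
  have hker : LinearMap.ker W.mulVecLin = Submodule.span ℝ {(fun _ => 1 : Fin n → ℝ)} := by
    apply le_antisymm
    · intro v hv
      rw [LinearMap.mem_ker, Matrix.mulVecLin_apply] at hv
      have heq : ∀ i : Fin n, ((m - 1 : ℕ) : ℝ) * v i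
          = ∑ l ∈ Finset.Icc 1 (m - 1), v (i - (l : Fin n)) := by
        intro i
        have := congrFun hv i
        rw [hmv, Pi.zero_apply, sub_eq_zero] at this
        exact this
      -- max argument
      obtain ⟨i0, -, hmax⟩ := Finset.exists_max_image Finset.univ v ⟨⟨0, by omega⟩, Finset.mem_univ _⟩
      have step : ∀ i : Fin n, v i = v i0 → v (i - 1) = v i0 := by
        intro i hi
        have hle : ∀ l ∈ Finset.Icc 1 (m-1), v (i - (l : Fin n)) ≤ v i0 := by
          intro l _; exact hmax _ (Finset.mem_univ _)
        have hsum : ∑ l ∈ Finset.Icc 1 (m-1), v (i - (l : Fin n))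
            = ∑ l ∈ Finset.Icc 1 (m-1), v i0 := by
          rw [← heq i, hi, Finset.sum_const, hcard, nsmul_eq_mul]
        have hall := (Finset.sum_eq_sum_iff_of_le hle).mp hsum
        have := hall 1 hm1
        simpa using this
      have allk : ∀ k : ℕ, v (i0 - (k : Fin n)) = v i0 := by
        intro k
        induction k with
        | zero => simp
        | succ k ih =>
          have := step _ ih
          have hrw : i0 - ((k+1 : ℕ) : Fin n) = i0 - (k : Fin n) - 1 := by
            push_cast
            ring
          rw [hrw]
          exact this
      have hconst : ∀ j : Fin n, v j = v i0 := by
        intro j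
        have := allk ((i0 - j : Fin n) : ℕ)
        rwa [Fin.cast_val_eq_self, sub_sub_cancel] at this
      rw [Submodule.mem_span_singleton]
      exact ⟨v i0, by funext j; simp [hconst j]⟩
    · rw [Submodule.span_le, Set.singleton_subset_iff]
      rw [SetLike.mem_coe, LinearMap.mem_ker, Matrix.mulVecLin_apply]
      funext i
      rw [hmv]
      simp [hcard]
  have hone : (fun _ => 1 : Fin n → ℝ) ≠ 0 := by
    intro h
    have := congrFun h ⟨0, by omega⟩
    norm_num at this
  have hdim : Module.finrank ℝ (LinearMap.ker W.mulVecLin) = 1 := by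
    rw [hker, finrank_span_singleton hone]
  have hrn := LinearMap.finrank_range_add_finrank_ker W.mulVecLin
  have hpi : Module.finrank ℝ (Fin n → ℝ) = n := by simp
  rw [hpi, hdim] at hrn
  have : W.rank = Module.finrank ℝ (LinearMap.range W.mulVecLin) := rfl
  omega
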